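/- Let N be a normalized symmetric gauge norm on c₀₀, the space of finitely supported complex sequences. Then there exists a subset 𝓖' of 𝓖 containing the sequence (1,0,0,…) such that for every x ∈ c₀₀, N(x) = sup{ Σ_n a_n x*_n : a ∈ 𝓖' }, where x* is the nonincreasing rearrangement of (|x_n|). -/

import Mathlib

/-- The coordinatewise absolute value of a finitely supported complex sequence. -/
noncomputable def absF (x : ℕ →₀ ℂ) : ℕ →₀ ℂ :=
  x.mapRange (fun z => (‖z‖ : ℂ)) (by simp)

/-- The nonincreasing rearrangement of the absolute values of a finitely supported
complex sequence: `rearr x n` is the `(n+1)`-st largest value among the `|x m|`. -/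
noncomputable def rearr (x : ℕ →₀ ℂ) (n : ℕ) : ℝ :=
  sInf {c : ℝ | ∃ S : Finset ℕ, S.card = n ∧ ∀ m ∉ S, ‖x m‖ ≤ c}

/-- The set `𝓖` of sequences `a : ℕ → ℝ` with `1 ≥ a₀ ≥ a₁ ≥ ⋯ ≥ 0` having only finitely
many nonzero terms. -/
def GSet : Set (ℕ → ℝ) :=
  {a | Antitone a ∧ a 0 ≤ 1 ∧ (∀ n, 0 ≤ a n) ∧ (Function.support a).Finite}


open Finset Finsupp

lemma rearr_bddBelow (x : ℕ →₀ ℂ) (k : ℕ) :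
    ∀ c ∈ {c : ℝ | ∃ S : Finset ℕ, S.card = k ∧ ∀ m ∉ S, ‖x m‖ ≤ c}, (0:ℝ) ≤ c := by
  rintro c ⟨S, -, hS⟩
  obtain ⟨m, hm⟩ := Infinite.exists_notMem_finset S
  exact (norm_nonneg _).trans (hS m hm)

lemma rearr_set_nonempty (x : ℕ →₀ ℂ) (k : ℕ) :
    {c : ℝ | ∃ S : Finset ℕ, S.card = k ∧ ∀ m ∉ S, ‖x m‖ ≤ c}.Nonempty := by
  obtain ⟨S, hS⟩ := Infinite.exists_subset_card_eq ℕ k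
  exact ⟨∑ n ∈ x.support, ‖x n‖, S, hS, fun m _ => by
    by_cases hm : m ∈ x.support
    · exact Finset.single_le_sum (f := fun n => ‖x n‖) (fun i _ => norm_nonneg _) hm
    · simp [Finsupp.notMem_support_iff.1 hm]
      positivity⟩

lemma rearr_nonneg (x : ℕ →₀ ℂ) (k : ℕ) : 0 ≤ rearr x k :=
  le_csInf (rearr_set_nonempty x k) (rearr_bddBelow x k)

lemma rearr_le (x : ℕ →₀ ℂ) {k : ℕ} {c : ℝ} (S : Finset ℕ) (hcard : S.card = k)
    (h : ∀ m ∉ S, ‖x m‖ ≤ c) : rearr x k ≤ c :=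
  csInf_le ⟨0, rearr_bddBelow x k⟩ ⟨S, hcard, h⟩

lemma le_rearr (x : ℕ →₀ ℂ) {k : ℕ} {v : ℝ}
    (h : ∀ c, (∃ S : Finset ℕ, S.card = k ∧ ∀ m ∉ S, ‖x m‖ ≤ c) → v ≤ c) :
    v ≤ rearr x k :=
  le_csInf (rearr_set_nonempty x k) h

lemma rearr_antitone (x : ℕ →₀ ℂ) : Antitone (rearr x) := by
  apply antitone_nat_of_succ_le
  intro k
  apply csInf_le_csInf ⟨0, rearr_bddBelow x (k+1)⟩ (rearr_set_nonempty x k)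
  rintro c ⟨S, hcard, hS⟩
  obtain ⟨m, hm⟩ := Infinite.exists_notMem_finset S
  exact ⟨insert m S, by simp [Finset.card_insert_of_notMem hm, hcard],
    fun n hn => hS n (fun h => hn (Finset.mem_insert_of_mem h))⟩

lemma rearr_eq_zero (x : ℕ →₀ ℂ) {k : ℕ} (hk : x.support.card ≤ k) : rearr x k = 0 := by
  refine le_antisymm ?_ (rearr_nonneg x k)
  obtain ⟨S, hsub, hcard⟩ := Infinite.exists_superset_card_eq x.support k hk
  exact rearr_le x S hcard (fun m hm => by
    have : m ∉ x.support := fun h => hm (hsub h)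
    simp [Finsupp.notMem_support_iff.1 this])

lemma exists_enum (x : ℕ →₀ ℂ) : ∃ e : Fin (x.support.card) → ℕ,
    Function.Injective e ∧ Finset.image e Finset.univ = x.support ∧
    Antitone (fun i => ‖x (e i)‖) ∧
    (∀ i : Fin (x.support.card), rearr x i = ‖x (e i)‖) := by
  classical
  set K := x.support.card with hK
  let m : Fin K ≃o {y // y ∈ x.support} := x.support.orderIsoOfFin rfl
  let τ : Equiv.Perm (Fin K) := Tuple.sort (fun i => -‖x ((m i : ℕ))‖)
  refine ⟨fun i => (m (τ i) : ℕ), ?_, ?_, ?_, ?_⟩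
  · intro i j hij
    exact τ.injective (m.injective (Subtype.ext hij))
  · apply Finset.eq_of_subset_of_card_le
    · intro n hn
      simp only [Finset.mem_image] at hn
      obtain ⟨i, -, rfl⟩ := hn
      exact (m (τ i)).2
    · rw [Finset.card_image_of_injective _
        (fun i j hij => τ.injective (m.injective (Subtype.ext hij)))]
      simp [hK]
  · have hmono := Tuple.monotone_sort (fun i => -‖x ((m i : ℕ))‖)
    intro i j hij
    have := hmono hij
    simpa using this
  · -- the main characterization
    have hinj : Function.Injective (fun i => (m (τ i) : ℕ)) :=
      fun i j hij => τ.injective (m.injective (Subtype.ext hij))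
    have hmem : ∀ i, ((m (τ i) : ℕ)) ∈ x.support := fun i => (m (τ i)).2
    have hanti : Antitone (fun i => ‖x ((m (τ i) : ℕ))‖) := by
      have hmono := Tuple.monotone_sort (fun i => -‖x ((m i : ℕ))‖)
      intro i j hij
      have := hmono hij
      simpa using this
    have himg : Finset.image (fun i => (m (τ i) : ℕ)) Finset.univ = x.support := by
      apply Finset.eq_of_subset_of_card_le
      · intro n hn
        simp only [Finset.mem_image] at hn
        obtain ⟨i, -, rfl⟩ := hn
        exact hmem i
      · rw [Finset.card_image_of_injective _ hinj]; simp [hK]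
    set e : Fin K → ℕ := fun i => (m (τ i) : ℕ) with he
    intro i
    refine le_antisymm ?_ ?_
    · -- rearr x i ≤ ‖x (e i)‖ via S = first i elements
      refine rearr_le x (Finset.image (fun j : Fin (i : ℕ) => e ⟨j, j.2.trans i.2⟩)
        Finset.univ) ?_ ?_
      · rw [Finset.card_image_of_injective]
        · simp
        · intro j j' h
          have := hinj h
          exact Fin.ext (by simpa using congrArg Fin.val this)
      · intro n hn
        by_cases hxn : x n = 0
        · simp [hxn]
        · have hns : n ∈ x.support := Finsupp.mem_support_iff.2 hxn
          rw [← himg] at hns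
          simp only [Finset.mem_image] at hns
          obtain ⟨j, -, rfl⟩ := hns
          have hji : i ≤ j := by
            by_contra hlt
            push_neg at hlt
            exact hn (Finset.mem_image.2 ⟨⟨j, hlt⟩, Finset.mem_univ _, by
              congr 1⟩)
          exact hanti hji
    · -- ‖x (e i)‖ ≤ rearr x i
      apply le_rearr
      rintro c ⟨S, hcard, hS⟩
      have hTS : ¬ (Finset.image (fun j : Fin ((i : ℕ)+1) => e ⟨j, Nat.lt_of_lt_of_le j.2 i.2⟩)
          Finset.univ ⊆ S) := by
        intro hsub
        have := Finset.card_le_card hsub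
        rw [Finset.card_image_of_injective, Finset.card_univ, Fintype.card_fin, hcard] at this
        · omega
        · intro j j' h
          have := hinj h
          exact Fin.ext (by simpa using congrArg Fin.val this)
      obtain ⟨n, hnT, hnS⟩ := Finset.not_subset.1 hTS
      simp only [Finset.mem_image] at hnT
      obtain ⟨j, -, rfl⟩ := hnT
      have : ‖x (e i)‖ ≤ ‖x (e ⟨j, Nat.lt_of_lt_of_le j.2 i.2⟩)‖ := by
        apply hanti
        simp [Fin.le_def]
        omega
      exact this.trans (hS _ hnS)


lemma exists_perm_map {M : ℕ} (u v : Fin M → ℕ) (hu : Function.Injective u)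
    (hv : Function.Injective v) : ∃ ρ : Equiv.Perm ℕ, ∀ i, ρ (u i) = v i := by
  classical
  set A : Set ℕ := Set.range u with hA
  set B : Set ℕ := Set.range v with hB
  haveI : Infinite ↥(Aᶜ) := Set.infinite_coe_iff.2 ((Set.finite_range u).infinite_compl)
  haveI : Infinite ↥(Bᶜ) := Set.infinite_coe_iff.2 ((Set.finite_range v).infinite_compl)
  haveI dA : Denumerable ↥(Aᶜ) := Nat.Subtype.denumerable _
  haveI dB : Denumerable ↥(Bᶜ) := Nat.Subtype.denumerable _
  let e1 : ↥A ≃ Fin M := (Equiv.ofInjective u hu).symm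
  let e2 : Fin M ≃ ↥B := Equiv.ofInjective v hv
  let e3 : ↥(Aᶜ) ≃ ↥(Bᶜ) := (Denumerable.eqv ↥(Aᶜ)).trans (Denumerable.eqv ↥(Bᶜ)).symm
  refine ⟨((Equiv.Set.sumCompl A).symm.trans
    (((e1.trans e2).sumCongr e3).trans (Equiv.Set.sumCompl B))), ?_⟩
  intro i
  have hmem : u i ∈ A := ⟨i, rfl⟩
  simp only [Equiv.trans_apply]
  rw [Equiv.Set.sumCompl_symm_apply_of_mem hmem]
  have h1 : (⟨u i, hmem⟩ : ↥A) = (Equiv.ofInjective u hu) i := rfl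
  have : ((e1.trans e2).sumCongr e3) (Sum.inl ⟨u i, hmem⟩) = Sum.inl (e2 (e1 ⟨u i, hmem⟩)) := rfl
  rw [this]
  have h2 : e1 ⟨u i, hmem⟩ = i := by
    simp only [e1, h1, Equiv.symm_apply_apply]
  rw [h2]
  have h3 : e2 i = ⟨v i, ⟨i, rfl⟩⟩ := rfl
  rw [h3]
  exact Equiv.Set.sumCompl_apply_inl B _

lemma cs_helper (a b p q : ℝ) :
    a * p + b * q ≤ Real.sqrt (p^2 + q^2) * Real.sqrt (a^2 + b^2) := by
  have h3 : (a*p+b*q)^2 ≤ (p^2+q^2) * (a^2+b^2) := by nlinarith [sq_nonneg (a*q - b*p)]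
  calc a*p+b*q ≤ |a*p+b*q| := le_abs_self _
    _ = Real.sqrt ((a*p+b*q)^2) := (Real.sqrt_sq_eq_abs _).symm
    _ ≤ Real.sqrt ((p^2+q^2) * (a^2+b^2)) := Real.sqrt_le_sqrt h3
    _ = Real.sqrt (p^2+q^2) * Real.sqrt (a^2+b^2) := Real.sqrt_mul (by positivity) _

lemma norm_complex_eq (z : ℂ) : ‖z‖ = Real.sqrt (z.re^2 + z.im^2) := by
  rw [Complex.norm_def, Complex.normSq_apply]
  ring_nf

lemma real_smul_finsupp (c : ℝ) (x : ℕ →₀ ℂ) : c • x = ((c:ℂ)) • x := by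
  ext n; simp [Complex.real_smul]


section Nlemmas
variable (N : (ℕ →₀ ℂ) → ℝ)
  (hadd : ∀ x y : ℕ →₀ ℂ, N (x + y) ≤ N x + N y)
  (hsmul : ∀ (c : ℂ) (x : ℕ →₀ ℂ), N (c • x) = ‖c‖ * N x)
  (hgauge : ∀ x : ℕ →₀ ℂ, N (absF x) = N x)
  (hsymm : ∀ (σ : Equiv.Perm ℕ) (x : ℕ →₀ ℂ), N (Finsupp.equivMapDomain σ x) = N x)
  (hnormalized : N (Finsupp.single 0 1) = 1)

include hsmul

lemma N_zero : N 0 = 0 := by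
  have := hsmul 0 0
  simpa using this

include hadd

lemma N_nonneg (x : ℕ →₀ ℂ) : 0 ≤ N x := by
  have h0 : N 0 = 0 := N_zero N hsmul
  have h1 : N (x + (-1:ℂ) • x) ≤ N x + N ((-1:ℂ) • x) := hadd _ _
  rw [neg_one_smul] at h1
  simp only [add_neg_cancel, h0] at h1
  have h2 : N (-x) = N x := by
    have := hsmul (-1) x
    simpa [neg_one_smul] using this
  linarith

include hgauge

lemma N_update (x : ℕ →₀ ℂ) (k : ℕ) (t : ℝ) (h0 : 0 ≤ t) (h1 : t ≤ 1) :
    N (x.update k ((t:ℂ) * x k)) ≤ N x := by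
  classical
  set x' : ℕ →₀ ℂ := x.update k (-(x k)) with hx'def
  have habs : absF x' = absF x := by
    ext n
    simp only [absF, Finsupp.mapRange_apply, hx'def, Finsupp.coe_update]
    by_cases hn : n = k
    · subst hn; simp
    · simp [Function.update_apply, hn]
  have hx' : N x' = N x := by rw [← hgauge x', habs, hgauge]
  have hdecomp : x.update k ((t:ℂ) * x k)
      = ((((1+t)/2 : ℝ) : ℂ)) • x + ((((1-t)/2 : ℝ) : ℂ)) • x' := by
    ext n
    simp only [Finsupp.add_apply, Finsupp.smul_apply, hx'def, Finsupp.coe_update,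
      smul_eq_mul]
    by_cases hn : n = k
    · subst hn; simp [Function.update_apply]; push_cast; ring
    · simp [Function.update_apply, hn]; push_cast; ring
  calc N (x.update k ((t:ℂ) * x k))
      ≤ N (((((1+t)/2 : ℝ) : ℂ)) • x) + N (((((1-t)/2 : ℝ) : ℂ)) • x') := by
        rw [hdecomp]; exact hadd _ _
    _ = (1+t)/2 * N x + (1-t)/2 * N x := by
        rw [hsmul, hsmul, hx', Complex.norm_real, Complex.norm_real,
          Real.norm_of_nonneg (by linarith), Real.norm_of_nonneg (by linarith)]
    _ = N x := by ring

lemma N_mono_aux (S : Finset ℕ) : ∀ x y : ℕ →₀ ℂ,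
    (∀ n, ∃ t : ℝ, 0 ≤ t ∧ t ≤ 1 ∧ y n = (t:ℂ) * x n) →
    (∀ n ∉ S, y n = x n) → N y ≤ N x := by
  classical
  induction S using Finset.induction_on with
  | empty =>
    intro x y _ hout
    have : y = x := Finsupp.ext fun n => hout n (by simp)
    rw [this]
  | @insert k S hk ih =>
    intro x y hts hout
    obtain ⟨t, ht0, ht1, htk⟩ := hts k
    set y' : ℕ →₀ ℂ := y.update k (x k) with hy'def
    have hy'x : ∀ n, ∃ t : ℝ, 0 ≤ t ∧ t ≤ 1 ∧ y' n = (t:ℂ) * x n := by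
      intro n
      by_cases hn : n = k
      · subst hn
        exact ⟨1, zero_le_one, le_refl _, by simp [hy'def]⟩
      · obtain ⟨s, hs0, hs1, hsn⟩ := hts n
        exact ⟨s, hs0, hs1, by simpa [hy'def, Finsupp.coe_update, Function.update_apply, hn]⟩
    have hy'out : ∀ n ∉ S, y' n = x n := by
      intro n hn
      by_cases hnk : n = k
      · subst hnk; simp [hy'def]
      · have : n ∉ insert k S := by simp [hnk, hn]
        simpa [hy'def, Finsupp.coe_update, Function.update_apply, hnk] using hout n this
    have h1 : N y' ≤ N x := ih x y' hy'x hy'out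
    have h2 : y = y'.update k ((t:ℂ) * y' k) := by
      ext n
      by_cases hn : n = k
      · subst hn; simp [hy'def, Finsupp.coe_update, Function.update_apply, htk]
      · simp [hy'def, Finsupp.coe_update, Function.update_apply, hn]
    calc N y = N (y'.update k ((t:ℂ) * y' k)) := by rw [← h2]
      _ ≤ N y' := N_update N hadd hsmul hgauge y' k t ht0 ht1
      _ ≤ N x := h1

lemma N_mono (x y : ℕ →₀ ℂ) (h : ∀ n, ‖y n‖ ≤ ‖x n‖) : N y ≤ N x := by
  classical
  have key : N (absF y) ≤ N (absF x) := by
    apply N_mono_aux N hadd hsmul hgauge (x.support ∪ y.support)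
    · intro n
      by_cases hx : x n = 0
      · have hy : y n = 0 := by
          have := h n
          rw [hx] at this
          simpa using norm_le_zero_iff.1 (by simpa using this)
        exact ⟨0, le_refl _, zero_le_one, by simp [absF, Finsupp.mapRange_apply, hy]⟩
      · refine ⟨‖y n‖ / ‖x n‖, div_nonneg (norm_nonneg _) (norm_nonneg _), ?_, ?_⟩
        · rw [div_le_one (norm_pos_iff.2 hx)]; exact h n
        · simp only [absF, Finsupp.mapRange_apply]
          rw [← Complex.ofReal_mul, div_mul_cancel₀]
          exact norm_ne_zero_iff.2 hx
    · intro n hn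
      simp only [Finset.mem_union, not_or, Finsupp.mem_support_iff, not_not] at hn
      simp [absF, Finsupp.mapRange_apply, hn.1, hn.2]
  rw [hgauge, hgauge] at key
  exact key

include hsymm hnormalized

lemma N_single (n : ℕ) (z : ℂ) : N (Finsupp.single n z) = ‖z‖ := by
  have h1 : Finsupp.single n z = z • Finsupp.single n (1:ℂ) := by
    rw [Finsupp.smul_single, smul_eq_mul, mul_one]
  have h2 : N (Finsupp.single n (1:ℂ)) = 1 := by
    have h := hsymm (Equiv.swap 0 n) (Finsupp.single 0 1)
    rw [Finsupp.equivMapDomain_single, Equiv.swap_apply_left] at h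
    rw [h, hnormalized]
  rw [h1, hsmul, h2, mul_one]

lemma norm_le_N (x : ℕ →₀ ℂ) (m : ℕ) : ‖x m‖ ≤ N x := by
  have h1 : N (Finsupp.single m (x m)) ≤ N x := by
    apply N_mono N hadd hsmul hgauge
    intro n
    rw [Finsupp.single_apply]
    by_cases hn : m = n
    · subst hn; simp
    · simp [hn]
  rwa [N_single N hadd hsmul hgauge hsymm hnormalized m (x m)] at h1


include hsymm hnormalized in
lemma exists_elem (x : ℕ →₀ ℂ) :
    ∃ a ∈ GSet, (∀ y : ℕ →₀ ℂ, ∑ᶠ n, a n * rearr y n ≤ N y) ∧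
      N x ≤ ∑ᶠ n, a n * rearr x n := by
  classical
  by_cases hx : x = 0
  · refine ⟨fun _ => 0, ⟨antitone_const, by norm_num, fun n => le_refl 0, by simp⟩, ?_, ?_⟩
    · intro y
      have : ∑ᶠ n, (0:ℝ) * rearr y n = 0 := by simp
      rw [this]; exact N_nonneg N hadd hsmul y
    · subst hx
      have h0 : N 0 = 0 := N_zero N hsmul
      have : ∑ᶠ n, (0:ℝ) * rearr (0 : ℕ →₀ ℂ) n = 0 := by simp
      rw [this, h0]
  · -- Hahn–Banach extension
    have hNx : ∀ (c : ℝ), 0 < c → ∀ v : ℕ →₀ ℂ, N (c • v) = c * N v := by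
      intro c hc v
      rw [real_smul_finsupp, hsmul, Complex.norm_real, Real.norm_of_nonneg hc.le]
    have hNnn := N_nonneg N hadd hsmul
    obtain ⟨g, hg1, hg2⟩ := exists_extension_of_le_sublinear
      (LinearPMap.mkSpanSingleton x (N x) hx) N hNx hadd (by
        rintro ⟨w, hw⟩
        obtain ⟨d, rfl⟩ := Submodule.mem_span_singleton.1 hw
        have happ : (LinearPMap.mkSpanSingleton x (N x) hx) ⟨d • x, hw⟩ = d • N x := by
          exact LinearPMap.mkSpanSingleton'_apply x (N x) _ d hw
        rw [happ]
        have : N (d • x) = |d| * N x := by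
          rw [real_smul_finsupp, hsmul, Complex.norm_real, Real.norm_eq_abs]
        rw [this, smul_eq_mul]
        have := le_abs_self d
        nlinarith [hNnn x])
    have hgx : g x = N x := by
      have h1 := hg1 ⟨x, Submodule.mem_span_singleton_self x⟩
      rw [LinearPMap.mkSpanSingleton_apply] at h1
      exact h1
    -- coordinate data
    set p : ℕ → ℝ := fun n => g (Finsupp.single n 1) with hp
    set q : ℕ → ℝ := fun n => g (Finsupp.single n Complex.I) with hq
    set c : ℕ → ℝ := fun n => Real.sqrt (p n ^ 2 + q n ^ 2) with hcdef
    have hc0 : ∀ n, 0 ≤ c n := fun n => Real.sqrt_nonneg _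
    have hcsq : ∀ n, c n ^ 2 = p n ^ 2 + q n ^ 2 := fun n => Real.sq_sqrt (by positivity)
    have hgs : ∀ (n : ℕ) (z : ℂ), g (Finsupp.single n z) = z.re * p n + z.im * q n := by
      intro n z
      have hdec : Finsupp.single n z
          = z.re • Finsupp.single n (1:ℂ) + z.im • Finsupp.single n Complex.I := by
        rw [Finsupp.smul_single, Finsupp.smul_single, ← Finsupp.single_add]
        congr 1
        simp only [Complex.real_smul, mul_one]
        exact (Complex.re_add_im z).symm
      rw [hdec, map_add, map_smul, map_smul, smul_eq_mul, smul_eq_mul]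
    have hbound : ∀ (n : ℕ) (z : ℂ), g (Finsupp.single n z) ≤ c n * ‖z‖ := by
      intro n z
      rw [hgs, norm_complex_eq]
      exact cs_helper z.re z.im (p n) (q n)
    have hNsingle : ∀ (n : ℕ) (z : ℂ), N (Finsupp.single n z) = ‖z‖ := fun n z =>
      N_single N hadd hsmul hgauge hsymm hnormalized n z
    have hzeta : ∀ n, ((p n : ℂ) + (q n : ℂ) * Complex.I).re = p n
        ∧ ((p n : ℂ) + (q n : ℂ) * Complex.I).im = q n := by
      intro n; constructor <;> simp
    have hzetanorm : ∀ n, ‖(p n : ℂ) + (q n : ℂ) * Complex.I‖ = c n := by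
      intro n
      rw [norm_complex_eq, (hzeta n).1, (hzeta n).2, hcdef]
    have hc1 : ∀ n, c n ≤ 1 := by
      intro n
      have h1 : g (Finsupp.single n ((p n : ℂ) + (q n : ℂ) * Complex.I)) = c n ^ 2 := by
        rw [hgs, (hzeta n).1, (hzeta n).2, hcsq]; ring
      have h2 := hg2 (Finsupp.single n ((p n : ℂ) + (q n : ℂ) * Complex.I))
      rw [h1, hNsingle, hzetanorm] at h2
      nlinarith [hc0 n]
    have hz : ∀ n, ∃ z : ℂ, ‖z‖ = 1 ∧ g (Finsupp.single n z) = c n := by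
      intro n
      by_cases h : c n = 0
      · refine ⟨1, by simp, ?_⟩
        have hpq : p n ^ 2 + q n ^ 2 = 0 := by rw [← hcsq, h]; norm_num
        have hp0 : p n = 0 := by nlinarith [sq_nonneg (p n), sq_nonneg (q n)]
        rw [hgs]
        simp [hp0, h]
      · have hcpos : 0 < c n := lt_of_le_of_ne (hc0 n) (Ne.symm h)
        refine ⟨(((c n)⁻¹ : ℝ) : ℂ) * ((p n : ℂ) + (q n : ℂ) * Complex.I), ?_, ?_⟩
        · rw [norm_mul, Complex.norm_real, Real.norm_eq_abs, abs_of_pos (by positivity),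
            hzetanorm, inv_mul_cancel₀ h]
        · rw [hgs]
          have hre : ((((c n)⁻¹ : ℝ) : ℂ) * ((p n : ℂ) + (q n : ℂ) * Complex.I)).re
              = (c n)⁻¹ * p n := by simp
          have him : ((((c n)⁻¹ : ℝ) : ℂ) * ((p n : ℂ) + (q n : ℂ) * Complex.I)).im
              = (c n)⁻¹ * q n := by simp
          rw [hre, him]
          have : (c n)⁻¹ * p n * p n + (c n)⁻¹ * q n * q n = (c n)⁻¹ * (c n ^ 2) := by
            rw [hcsq]; ring
          rw [this]
          field_simp
    choose zf hz1 hz2 using hz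
    -- enumeration of x
    set K := x.support.card with hK
    obtain ⟨e, einj, eimg, eanti, espec⟩ := exists_enum x
    set f : Fin K → ℝ := fun i => c (e i) with hf
    set σ : Equiv.Perm (Fin K) := Tuple.sort (fun i => -(f i)) with hσ
    have hfa : Antitone (fun i => f (σ i)) := by
      have hmono := Tuple.monotone_sort (fun i => -(f i))
      intro i j hij
      have := hmono hij
      simp only [Function.comp_apply, neg_le_neg_iff] at this
      linarith [this]
    set a : ℕ → ℝ := fun k => if h : k < K then f (σ ⟨k, h⟩) else 0 with ha
    have ha_eqf : ∀ i : Fin K, a (i : ℕ) = f (σ i) := by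
      intro i
      simp only [ha, i.2, dif_pos, Fin.eta]
    have ha_nonneg : ∀ k, 0 ≤ a k := by
      intro k
      by_cases h : k < K
      · simp only [ha, dif_pos h]; exact hc0 _
      · simp only [ha, dif_neg h]; exact le_refl 0
    have ha_zero : ∀ k, K ≤ k → a k = 0 := by
      intro k hk; simp only [ha, dif_neg (not_lt.2 hk)]
    have ha_gset : a ∈ GSet := by
      refine ⟨?_, ?_, ha_nonneg, ?_⟩
      · intro i j hij
        by_cases hj : j < K
        · have hi : i < K := lt_of_le_of_lt hij hj
          simp only [ha, dif_pos hi, dif_pos hj]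
          exact hfa (show (⟨i, hi⟩ : Fin K) ≤ ⟨j, hj⟩ from hij)
        · rw [ha_zero j (not_lt.1 hj)]; exact ha_nonneg i
      · by_cases h0 : 0 < K
        · simp only [ha, dif_pos h0]; exact hc1 _
        · rw [ha_zero 0 (not_lt.1 h0)]; norm_num
      · apply Set.Finite.subset (Finset.range K).finite_toSet
        intro k hk
        simp only [Function.mem_support] at hk
        simp only [Finset.coe_range, Set.mem_Iio]
        by_contra h
        exact hk (ha_zero k (not_lt.1 h))
    have hsum : ∀ y : ℕ →₀ ℂ,
        ∑ᶠ n, a n * rearr y n = ∑ i : Fin K, f (σ i) * rearr y (i : ℕ) := by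
      intro y
      have hsupp : Function.support (fun k => a k * rearr y k) ⊆ ↑(Finset.range K) := by
        intro k hk
        simp only [Function.mem_support] at hk
        simp only [Finset.coe_range, Set.mem_Iio]
        by_contra h
        exact hk (by rw [ha_zero k (not_lt.1 h), zero_mul])
      rw [finsum_eq_finset_sum_of_support_subset _ hsupp,
        ← Fin.sum_univ_eq_sum_range (fun k => a k * rearr y k)]
      exact Finset.sum_congr rfl (fun i _ => by rw [ha_eqf i])
    have heσinj : Function.Injective (fun i : Fin K => e (σ i)) :=
      fun i j hij => σ.injective (einj hij)
    -- the constraint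
    have hconstraint : ∀ y : ℕ →₀ ℂ, ∑ᶠ n, a n * rearr y n ≤ N y := by
      intro y
      rw [hsum y]
      set L := y.support.card with hL
      obtain ⟨ey, eyinj, eyimg, eyanti, eyspec⟩ := exists_enum y
      set y' : ℕ →₀ ℂ := ∑ i : Fin K,
        Finsupp.single (e (σ i)) (zf (e (σ i)) * ((rearr y (i : ℕ) : ℝ) : ℂ)) with hy'
      have hgy' : g y' = ∑ i : Fin K, f (σ i) * rearr y (i : ℕ) := by
        rw [hy', map_sum]
        apply Finset.sum_congr rfl
        intro i _
        have hsingle : Finsupp.single (e (σ i)) (zf (e (σ i)) * ((rearr y (i : ℕ) : ℝ) : ℂ))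
            = (rearr y (i : ℕ)) • Finsupp.single (e (σ i)) (zf (e (σ i))) := by
          rw [Finsupp.smul_single]
          congr 1
          rw [Complex.real_smul, mul_comm]
        rw [hsingle, map_smul, smul_eq_mul, hz2]
        rw [hf]
        ring
      have hval : ∀ i : Fin K, y' (e (σ i)) = zf (e (σ i)) * ((rearr y (i : ℕ) : ℝ) : ℂ) := by
        intro i
        rw [hy', Finsupp.finset_sum_apply]
        rw [Finset.sum_eq_single i]
        · rw [Finsupp.single_eq_same]
        · intro j _ hji
          rw [Finsupp.single_apply, if_neg (fun h => hji (heσinj h))]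
        · intro h; exact absurd (Finset.mem_univ i) h
      have hzero : ∀ n, (¬ ∃ i : Fin K, e (σ i) = n) → y' n = 0 := by
        intro n hn
        rw [hy', Finsupp.finset_sum_apply]
        apply Finset.sum_eq_zero
        intro i _
        rw [Finsupp.single_apply, if_neg (fun h => hn ⟨i, h⟩)]
      -- permutation matching
      set M := min K L with hM
      set u : Fin M → ℕ := fun i => ey ⟨i, lt_of_lt_of_le i.2 (min_le_right K L)⟩ with hu
      set v : Fin M → ℕ := fun i => e (σ ⟨i, lt_of_lt_of_le i.2 (min_le_left K L)⟩) with hv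
      have huinj : Function.Injective u := by
        intro i j hij
        have := eyinj hij
        exact Fin.ext (by simpa using congrArg Fin.val this)
      have hvinj : Function.Injective v := by
        intro i j hij
        have := heσinj hij
        exact Fin.ext (by simpa using congrArg Fin.val this)
      obtain ⟨ρ, hρ⟩ := exists_perm_map u v huinj hvinj
      have hNy' : N y' ≤ N y := by
        rw [← hsymm ρ y]
        apply N_mono N hadd hsmul hgauge
        intro n
        rw [Finsupp.equivMapDomain_apply]
        by_cases hn : ∃ i : Fin K, e (σ i) = n
        · obtain ⟨i, rfl⟩ := hn
          rw [hval i, norm_mul, hz1, one_mul, Complex.norm_real,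
            Real.norm_of_nonneg (rearr_nonneg y _)]
          by_cases hiL : (i : ℕ) < L
          · have hiM : (i : ℕ) < M := lt_min i.2 hiL
            have h1 := hρ ⟨i, hiM⟩
            have hv' : v ⟨(i : ℕ), hiM⟩ = e (σ i) :=
              congrArg (fun t => e (σ t)) (Fin.ext rfl)
            have hu' : u ⟨(i : ℕ), hiM⟩ = ey ⟨(i : ℕ), hiL⟩ :=
              congrArg ey (Fin.ext rfl)
            rw [hv', hu'] at h1
            have h2 : ρ.symm (e (σ i)) = ey ⟨(i : ℕ), hiL⟩ := by
              rw [← h1, Equiv.symm_apply_apply]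
            rw [h2, ← eyspec ⟨(i : ℕ), hiL⟩]
          · rw [rearr_eq_zero y (not_lt.1 hiL)]
            exact norm_nonneg _
        · rw [hzero _ hn]
          simp
      calc ∑ i : Fin K, f (σ i) * rearr y (i : ℕ) = g y' := hgy'.symm
        _ ≤ N y' := hg2 y'
        _ ≤ N y := hNy'
    refine ⟨a, ha_gset, hconstraint, ?_⟩
    -- the equality direction at x
    rw [hsum x]
    have hx_sum : (∑ n ∈ x.support, Finsupp.single n (x n)) = x := Finsupp.sum_single x
    have step2 : g x ≤ ∑ n ∈ x.support, c n * ‖x n‖ := by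
      conv_lhs => rw [← hx_sum]
      rw [map_sum]
      exact Finset.sum_le_sum (fun n _ => hbound n (x n))
    have step3 : ∑ n ∈ x.support, c n * ‖x n‖ = ∑ i : Fin K, f i * rearr x (i : ℕ) := by
      rw [← eimg, Finset.sum_image (fun i _ j _ h => einj h)]
      exact Finset.sum_congr rfl (fun i _ => by rw [hf, espec i])
    have step4 : ∑ i : Fin K, f i * rearr x (i : ℕ)
        ≤ ∑ i : Fin K, f (σ i) * rearr x (i : ℕ) := by
      have hmono : Monovary (fun i => f (σ i)) (fun i : Fin K => rearr x (i : ℕ)) := by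
        intro i j hij
        have hji : j ≤ i := by
          by_contra h
          push_neg at h
          have := rearr_antitone x (show ((i : Fin K) : ℕ) ≤ (j : ℕ) from le_of_lt h)
          exact absurd hij (not_lt.2 this)
        exact hfa hji
      have hkey := Monovary.sum_comp_perm_smul_le_sum_smul (σ := σ⁻¹) hmono
      simp only [smul_eq_mul] at hkey
      have : ∀ i : Fin K, f (σ (σ⁻¹ i)) = f i := fun i => by rw [Equiv.Perm.coe_inv, Equiv.apply_symm_apply]
      calc ∑ i : Fin K, f i * rearr x (i : ℕ)
          = ∑ i : Fin K, f (σ (σ⁻¹ i)) * rearr x (i : ℕ) :=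
            Finset.sum_congr rfl (fun i _ => by rw [this i])
        _ ≤ ∑ i : Fin K, f (σ i) * rearr x (i : ℕ) := hkey
    calc N x = g x := hgx.symm
      _ ≤ ∑ n ∈ x.support, c n * ‖x n‖ := step2
      _ = ∑ i : Fin K, f i * rearr x (i : ℕ) := step3
      _ ≤ ∑ i : Fin K, f (σ i) * rearr x (i : ℕ) := step4

end Nlemmas


/-- Representation theorem for normalized symmetric gauge norms on `c₀₀`: there is a subset
`𝓖'` of `𝓖` containing `(1,0,0,…)` with `N(x) = sup{ Σ_n a_n x*_n : a ∈ 𝓖' }` for all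
`x ∈ c₀₀`. -/
theorem symmetric_gauge_norm_representation (N : (ℕ →₀ ℂ) → ℝ)
    (hadd : ∀ x y : ℕ →₀ ℂ, N (x + y) ≤ N x + N y)
    (hsmul : ∀ (c : ℂ) (x : ℕ →₀ ℂ), N (c • x) = ‖c‖ * N x)
    (hdef : ∀ x : ℕ →₀ ℂ, N x = 0 → x = 0)
    (hgauge : ∀ x : ℕ →₀ ℂ, N (absF x) = N x)
    (hsymm : ∀ (σ : Equiv.Perm ℕ) (x : ℕ →₀ ℂ), N (Finsupp.equivMapDomain σ x) = N x)
    (hnormalized : N (Finsupp.single 0 1) = 1) :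
    ∃ G' ⊆ GSet, (fun n => if n = 0 then (1:ℝ) else 0) ∈ G' ∧
      ∀ x : ℕ →₀ ℂ, N x = sSup ((fun a : ℕ → ℝ => ∑ᶠ n, a n * rearr x n) '' G') := by
  classical
  refine ⟨{a | a ∈ GSet ∧ ∀ y : ℕ →₀ ℂ, ∑ᶠ n, a n * rearr y n ≤ N y},
    fun a ha => ha.1, ⟨⟨?_, by norm_num, ?_, ?_⟩, ?_⟩, ?_⟩
  · intro i j hij
    by_cases hi : i = 0
    · subst hi
      by_cases hj : j = 0 <;> simp [hj]
    · have hj : j ≠ 0 := by omega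
      simp [hi, hj]
  · intro n
    by_cases h : n = 0 <;> simp [h]
  · apply Set.Finite.subset (Set.finite_singleton 0)
    intro n hn
    simp only [Function.mem_support] at hn
    by_contra h
    simp only [Set.mem_singleton_iff] at h
    exact hn (by simp [h])
  · intro y
    have heq : ∑ᶠ n, (if n = 0 then (1:ℝ) else 0) * rearr y n = rearr y 0 := by
      rw [finsum_eq_single _ 0 (fun b hb => by simp [hb])]
      simp
    rw [heq]
    refine rearr_le y (∅ : Finset ℕ) (Finset.card_empty) ?_
    intro m _
    exact norm_le_N N hadd hsmul hgauge hsymm hnormalized y m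
  · intro x
    obtain ⟨a, hag, hacon, hax⟩ := exists_elem N hadd hsmul hgauge hsymm hnormalized x
    have hval : ∑ᶠ n, a n * rearr x n = N x := le_antisymm (hacon x) hax
    have hmem : N x ∈ ((fun a : ℕ → ℝ => ∑ᶠ n, a n * rearr x n) ''
        {a | a ∈ GSet ∧ ∀ y : ℕ →₀ ℂ, ∑ᶠ n, a n * rearr y n ≤ N y}) :=
      ⟨a, ⟨hag, hacon⟩, hval⟩
    have hub : ∀ b ∈ ((fun a : ℕ → ℝ => ∑ᶠ n, a n * rearr x n) ''
        {a | a ∈ GSet ∧ ∀ y : ℕ →₀ ℂ, ∑ᶠ n, a n * rearr y n ≤ N y}), b ≤ N x := by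
      rintro b ⟨a', ⟨-, ha'⟩, rfl⟩
      exact ha' x
    exact le_antisymm (le_csSup ⟨N x, hub⟩ hmem) (csSup_le ⟨N x, hmem⟩ hub)
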